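/- Fix x ∈ {0,1}^p, a finite set K, a finite cube {0,1}^m, and a distinguished point v̄ ∈ {0,1}^m. Suppose given {0,1}-valued random variables X = (X₁,…,X_p) and Y on Ω, a family (Y_u)_{u ∈ {0,1}^K} of {0,1}-valued random variables with Y_u(ω) ≤ Y_{u'}(ω) for all ω whenever u ≼ u', and maps G_v : Ω → {0,1}^K for v ∈ {0,1}^m; set N_v(ω) = Y_{G_v(ω)}(ω). Assume: (i) N_v(ω) ≤ N_{v'}(ω) for all ω whenever v ≼ v'; (ii) for every ω in the event {X = x}: G_{v̄}(ω) equals the observed values (X_k(ω))_{k ∈ K} and Y(ω) = N_{v̄}(ω). Define C = {ω : Y_u(ω) ≠ Y_{u'}(ω) for some u ≠ u'} and R = {ω : N_v(ω) = N_{v'}(ω) for all v, v'}, and let 0 and 1 denote the all-zeros and all-ones points of the relevant cubes. Then C ∩ R ∩ {X = x, Y = 1} = {Y_0 = 0} ∩ {N_0 = 1} ∩ {X = x}. Consequently, if P(X = x, Y = 1) > 0, then Pr(C ∩ R | X = x, Y = 1) = P(Y_0 = 0, N_0 = 1, X = x) / P(X = x, Y = 1). -/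
import Mathlib


open MeasureTheory

/-- Conditional probability `Pr(A | B) = P(A ∩ B) / P(B)` as a real number. -/
noncomputable def condProb {Ω : Type*} [MeasurableSpace Ω] (μ : Measure Ω) (A B : Set Ω) : ℝ :=
  (μ (A ∩ B)).toReal / (μ B).toReal

/-- key reduction in the proof of Theorem 1: under monotonicity and
consistency, `C ∩ R ∩ {X = x, Y = 1} = {Y_0 = 0} ∩ {N_0 = 1} ∩ {X = x}`, and hence
`Pr(C ∩ R | X = x, Y = 1) = P(Y_0 = 0, N_0 = 1, X = x) / P(X = x, Y = 1)`. -/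
theorem stmt13 {Ω : Type*} [MeasurableSpace Ω] (μ : Measure Ω) [IsProbabilityMeasure μ]
    {p m : ℕ} (K : Finset (Fin p)) (x : Fin p → Bool) (vbar : Fin m → Bool)
    (X : Ω → Fin p → Bool) (Y : Ω → Bool)
    (Ypo : ({ k // k ∈ K } → Bool) → Ω → Bool)
    -- monotonicity of the potential outcomes of Y
    (hYmono : ∀ (u u' : { k // k ∈ K } → Bool), u ≤ u' → ∀ ω, Ypo u ω ≤ Ypo u' ω)
    (G : (Fin m → Bool) → Ω → ({ k // k ∈ K } → Bool))
    (N : (Fin m → Bool) → Ω → Bool)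
    (hN : ∀ v ω, N v ω = Ypo (G v ω) ω)
    -- (i) monotonicity of the nested counterfactuals
    (hNmono : ∀ (v v' : Fin m → Bool), v ≤ v' → ∀ ω, N v ω ≤ N v' ω)
    -- (ii) consistency on the event {X = x}
    (hcons : ∀ ω, X ω = x →
      (G vbar ω = fun k => X ω k.1) ∧ Y ω = N vbar ω) :
    ({ω | ∃ u u' : { k // k ∈ K } → Bool, u ≠ u' ∧ Ypo u ω ≠ Ypo u' ω} ∩
        {ω | ∀ v v' : Fin m → Bool, N v ω = N v' ω} ∩
        {ω | X ω = x ∧ Y ω = true} =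
      {ω | Ypo (fun _ => false) ω = false} ∩ {ω | N (fun _ => false) ω = true} ∩
        {ω | X ω = x}) ∧
    (0 < μ {ω | X ω = x ∧ Y ω = true} →
      condProb μ
          ({ω | ∃ u u' : { k // k ∈ K } → Bool, u ≠ u' ∧ Ypo u ω ≠ Ypo u' ω} ∩
            {ω | ∀ v v' : Fin m → Bool, N v ω = N v' ω})
          {ω | X ω = x ∧ Y ω = true} =
        (μ ({ω | Ypo (fun _ => false) ω = false} ∩ {ω | N (fun _ => false) ω = true} ∩
              {ω | X ω = x})).toReal /
          (μ {ω | X ω = x ∧ Y ω = true}).toReal) := by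
  constructor
  · ext ω
    simp only [Set.mem_inter_iff, Set.mem_setOf_eq]
    constructor
    · rintro ⟨⟨⟨u, u', huu, hY⟩, hR⟩, hx, hy⟩
      obtain ⟨hG, hYN⟩ := hcons ω hx
      refine ⟨⟨?_, ?_⟩, hx⟩
      · have h1 := hYmono (fun _ => false) u (fun k => Bool.false_le _) ω
        have h2 := hYmono (fun _ => false) u' (fun k => Bool.false_le _) ω
        cases h : Ypo (fun _ => false) ω with
        | false => rfl
        | true =>
          rw [h] at h1 h2
          exact absurd ((le_antisymm (Bool.le_true _) h1).trans
            (le_antisymm h2 (Bool.le_true _))) hY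
      · rw [hR (fun _ => false) vbar, ← hYN, hy]
    · rintro ⟨⟨h0, h1⟩, hx⟩
      have hall : ∀ v, N v ω = true := fun v =>
        le_antisymm (Bool.le_true _)
          (h1 ▸ hNmono (fun _ => false) v (fun i => Bool.false_le _) ω)
      have hdiff : Ypo (fun _ => false) ω ≠ Ypo (G (fun _ => false) ω) ω := by
        rw [h0, ← hN, h1]; simp
      refine ⟨⟨⟨fun _ => false, G (fun _ => false) ω,
        fun h => hdiff (by rw [h]), hdiff⟩,
        fun v v' => (hall v).trans (hall v').symm⟩, hx, ?_⟩
      rw [(hcons ω hx).2, hall]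
  · intro _
    unfold condProb
    rw [show ({ω | ∃ u u' : { k // k ∈ K } → Bool, u ≠ u' ∧ Ypo u ω ≠ Ypo u' ω} ∩
            {ω | ∀ v v' : Fin m → Bool, N v ω = N v' ω}) ∩
          {ω | X ω = x ∧ Y ω = true} =
        {ω | Ypo (fun _ => false) ω = false} ∩ {ω | N (fun _ => false) ω = true} ∩
          {ω | X ω = x} from ?_]
    · ext ω
      simp only [Set.mem_inter_iff, Set.mem_setOf_eq]
      constructor
      · rintro ⟨⟨⟨u, u', huu, hY⟩, hR⟩, hx, hy⟩
        obtain ⟨hG, hYN⟩ := hcons ω hx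
        refine ⟨⟨?_, ?_⟩, hx⟩
        · have h1 := hYmono (fun _ => false) u (fun k => Bool.false_le _) ω
          have h2 := hYmono (fun _ => false) u' (fun k => Bool.false_le _) ω
          cases h : Ypo (fun _ => false) ω with
          | false => rfl
          | true =>
            rw [h] at h1 h2
            exact absurd ((le_antisymm (Bool.le_true _) h1).trans
              (le_antisymm h2 (Bool.le_true _))) hY
        · rw [hR (fun _ => false) vbar, ← hYN, hy]
      · rintro ⟨⟨h0, h1⟩, hx⟩
        have hall : ∀ v, N v ω = true := fun v =>
          le_antisymm (Bool.le_true _)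
            (h1 ▸ hNmono (fun _ => false) v (fun i => Bool.false_le _) ω)
        have hdiff : Ypo (fun _ => false) ω ≠ Ypo (G (fun _ => false) ω) ω := by
          rw [h0, ← hN, h1]; simp
        refine ⟨⟨⟨fun _ => false, G (fun _ => false) ω,
          fun h => hdiff (by rw [h]), hdiff⟩,
          fun v v' => (hall v).trans (hall v').symm⟩, hx, ?_⟩
        rw [(hcons ω hx).2, hall]
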